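/- For α > 0, H ∈ (0,1) with H ≠ 1/α, and t > 0, the integral ∫_0^∞ |(t+s)^{H-1/α} - s^{H-1/α}|^α ds is finite. Moreover, if H ≥ 1 the integral diverges. -/

import Mathlib

open MeasureTheory

lemma lfsm_key_eq (β t : ℝ) (hβ : β ≠ 0) (ht : 0 < t) {s : ℝ} (hs : 0 < s) :
    (t + s) ^ β - s ^ β = β * ∫ u in s..(s + t), u ^ (β - 1) := by
  rw [integral_rpow (Or.inr ⟨by intro h; exact hβ (by linarith),
    Set.notMem_uIcc_of_lt hs (by linarith)⟩)]
  have h1 : β - 1 + 1 = β := by ring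
  rw [h1, mul_div_cancel₀ _ hβ, add_comm t s]

lemma lfsm_upper (β t : ℝ) (hβ : β ≠ 0) (hβ1 : β ≤ 1) (ht : 0 < t) {s : ℝ} (hs : 0 < s) :
    |(t + s) ^ β - s ^ β| ≤ |β| * t * s ^ (β - 1) := by
  rw [lfsm_key_eq β t hβ ht hs, abs_mul]
  have hb : ∀ x ∈ Set.uIoc s (s + t), ‖x ^ (β - 1)‖ ≤ s ^ (β - 1) := by
    intro x hx
    rw [Set.uIoc_of_le (by linarith)] at hx
    obtain ⟨hx1, hx2⟩ := hx
    rw [Real.norm_eq_abs, abs_of_nonneg (Real.rpow_nonneg (by linarith) _)]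
    exact Real.rpow_le_rpow_of_nonpos hs hx1.le (by linarith)
  have h2 := intervalIntegral.norm_integral_le_of_norm_le_const hb
  have h3 : |∫ u in s..(s + t), u ^ (β - 1)| ≤ s ^ (β - 1) * t := by
    simpa [abs_of_pos ht, Real.norm_eq_abs] using h2
  refine le_trans (mul_le_mul_of_nonneg_left h3 (abs_nonneg β)) (le_of_eq (by ring))

lemma lfsm_lower (β t : ℝ) (hβ : β ≠ 0) (ht : 0 < t) {s : ℝ} (hs : 1 ≤ s) :
    |β| * t * ((1 + t) ^ (-|β - 1|) * s ^ (β - 1)) ≤ |(t + s) ^ β - s ^ β| := by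
  have hs0 : (0:ℝ) < s := lt_of_lt_of_le one_pos hs
  rw [lfsm_key_eq β t hβ ht hs0, abs_mul]
  set c : ℝ := (1 + t) ^ (-|β - 1|) * s ^ (β - 1) with hc
  have hcx : ∀ x ∈ Set.Icc s (s + t), (fun _ : ℝ => c) x ≤ (fun u : ℝ => u ^ (β - 1)) x := by
    intro x hx
    obtain ⟨hx1, hx2⟩ := hx
    simp only
    rcases le_or_gt 1 β with h1 | h1
    · rw [hc, abs_of_nonneg (by linarith : (0:ℝ) ≤ β - 1)]
      have e1 : (1 + t) ^ (-(β - 1)) ≤ 1 :=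
        Real.rpow_le_one_of_one_le_of_nonpos (by linarith) (by linarith)
      have e2 : s ^ (β - 1) ≤ x ^ (β - 1) := Real.rpow_le_rpow hs0.le hx1 (by linarith)
      calc (1 + t) ^ (-(β - 1)) * s ^ (β - 1) ≤ 1 * s ^ (β - 1) :=
            mul_le_mul_of_nonneg_right e1 (Real.rpow_nonneg hs0.le _)
        _ = s ^ (β - 1) := one_mul _
        _ ≤ x ^ (β - 1) := e2
    · rw [hc, abs_of_nonpos (by linarith : β - 1 ≤ 0), neg_neg,
        ← Real.mul_rpow (by linarith) hs0.le]
      exact Real.rpow_le_rpow_of_nonpos (by linarith) (by nlinarith) (by linarith)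
  have hint1 : IntervalIntegrable (fun u : ℝ => u ^ (β - 1)) volume s (s + t) :=
    intervalIntegral.intervalIntegrable_rpow (Or.inr (Set.notMem_uIcc_of_lt hs0 (by linarith)))
  have hmono : (∫ _ in s..(s + t), c) ≤ ∫ u in s..(s + t), u ^ (β - 1) :=
    intervalIntegral.integral_mono_on (by linarith) intervalIntegrable_const hint1 hcx
  rw [intervalIntegral.integral_const, smul_eq_mul] at hmono
  have hts : s + t - s = t := by ring
  rw [hts] at hmono
  have h3 : t * c ≤ |∫ u in s..(s + t), u ^ (β - 1)| :=
    le_trans hmono (le_abs_self _)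
  refine le_trans (le_of_eq (by ring)) (mul_le_mul_of_nonneg_left h3 (abs_nonneg β))

theorem lfsm_kernel_integrability (α : ℝ) (hα : 0 < α) (t : ℝ) (ht : 0 < t) :
    (∀ H : ℝ, 0 < H → H < 1 → H ≠ 1 / α →
      IntegrableOn
        (fun s : ℝ => |(t + s) ^ (H - 1 / α) - s ^ (H - 1 / α)| ^ α) (Set.Ioi 0)) ∧
    (∀ H : ℝ, 1 ≤ H → H ≠ 1 / α →
      ¬ IntegrableOn
        (fun s : ℝ => |(t + s) ^ (H - 1 / α) - s ^ (H - 1 / α)| ^ α) (Set.Ioi 0)) := by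
  have hmeas : ∀ β : ℝ,
      AEStronglyMeasurable (fun s : ℝ => |(t + s) ^ β - s ^ β| ^ α)
        (volume.restrict (Set.Ioi (0:ℝ))) := by
    intro β
    refine (ContinuousOn.aestronglyMeasurable ?_ measurableSet_Ioi)
    intro s hs
    have hs0 : (0:ℝ) < s := hs
    exact (((((continuousAt_const.add continuousAt_id).rpow_const
      (Or.inl (add_pos ht hs0).ne')).sub
      (continuousAt_id.rpow_const (Or.inl hs0.ne'))).abs.rpow_const
      (Or.inr hα.le))).continuousWithinAt
  constructor
  · intro H hH0 hH1 hHα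
    set β : ℝ := H - 1 / α with hβdef
    have hβ : β ≠ 0 := sub_ne_zero.mpr hHα
    have hβ1 : β < 1 := by
      have : 0 < 1 / α := by positivity
      simp only [hβdef]; linarith
    rw [← Set.Ioc_union_Ioi_eq_Ioi (zero_le_one (α := ℝ)), integrableOn_union]
    constructor
    · -- near zero
      rcases hβ.lt_or_gt with hneg | hpos
      · -- β < 0 : dominate by s ^ (α * β)
        have he : -1 < α * β := by
          have : α * β = α * H - 1 := by rw [hβdef]; field_simp
          nlinarith
        have hg : IntegrableOn (fun s : ℝ => s ^ (α * β)) (Set.Ioc (0:ℝ) 1) :=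
          (intervalIntegral.intervalIntegrable_rpow' he).1
        refine Integrable.mono hg ((hmeas β).mono_set Set.Ioc_subset_Ioi_self) ?_
        rw [ae_restrict_iff' measurableSet_Ioc]
        refine Filter.Eventually.of_forall fun s hs => ?_
        obtain ⟨hs0, hs1⟩ := hs
        have hd : |(t + s) ^ β - s ^ β| ≤ s ^ β := by
          rw [abs_le]
          constructor
          · have := Real.rpow_nonneg (by linarith : (0:ℝ) ≤ t + s) β
            linarith
          · have := Real.rpow_le_rpow_of_nonpos hs0 (by linarith : s ≤ t + s) hneg.le
            have := Real.rpow_nonneg hs0.le β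
            linarith
        rw [Real.norm_eq_abs, Real.norm_eq_abs,
          abs_of_nonneg (Real.rpow_nonneg (abs_nonneg _) _),
          abs_of_nonneg (Real.rpow_nonneg hs0.le _), mul_comm α β,
          Real.rpow_mul hs0.le]
        exact Real.rpow_le_rpow (abs_nonneg _) hd hα.le
      · -- 0 < β : dominate by constant
        have hg : IntegrableOn (fun _ : ℝ => ((t + 1) ^ β) ^ α) (Set.Ioc (0:ℝ) 1) :=
          integrableOn_const measure_Ioc_lt_top.ne
        refine Integrable.mono hg ((hmeas β).mono_set Set.Ioc_subset_Ioi_self) ?_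
        rw [ae_restrict_iff' measurableSet_Ioc]
        refine Filter.Eventually.of_forall fun s hs => ?_
        obtain ⟨hs0, hs1⟩ := hs
        have hd : |(t + s) ^ β - s ^ β| ≤ (t + 1) ^ β := by
          rw [abs_le]
          constructor
          · have h1 : s ^ β ≤ (t + 1) ^ β :=
              Real.rpow_le_rpow hs0.le (by linarith) hpos.le
            have h2 := Real.rpow_nonneg (by linarith : (0:ℝ) ≤ t + s) β
            linarith
          · have h1 : (t + s) ^ β ≤ (t + 1) ^ β :=
              Real.rpow_le_rpow (by linarith) (by linarith) hpos.le
            have h2 := Real.rpow_nonneg hs0.le β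
            linarith
        rw [Real.norm_eq_abs, Real.norm_eq_abs,
          abs_of_nonneg (Real.rpow_nonneg (abs_nonneg _) _),
          abs_of_nonneg (Real.rpow_nonneg (Real.rpow_nonneg (by linarith) _) _)]
        exact Real.rpow_le_rpow (abs_nonneg _) hd hα.le
    · -- at infinity
      have he : α * (β - 1) < -1 := by
        have : α * (β - 1) = α * H - 1 - α := by rw [hβdef]; field_simp
        nlinarith
      have hg : IntegrableOn (fun s : ℝ => (|β| * t) ^ α * s ^ (α * (β - 1)))
          (Set.Ioi (1:ℝ)) :=
        (integrableOn_Ioi_rpow_of_lt he zero_lt_one).const_mul _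
      refine Integrable.mono hg
        ((hmeas β).mono_set (Set.Ioi_subset_Ioi zero_le_one)) ?_
      rw [ae_restrict_iff' measurableSet_Ioi]
      refine Filter.Eventually.of_forall fun s hs => ?_
      have hs1 : (1:ℝ) < s := hs
      have hs0 : (0:ℝ) < s := by linarith
      have hd := lfsm_upper β t hβ hβ1.le ht hs0
      have key : |(t + s) ^ β - s ^ β| ^ α ≤ (|β| * t) ^ α * s ^ (α * (β - 1)) := by
        have h1 : |(t + s) ^ β - s ^ β| ^ α ≤ (|β| * t * s ^ (β - 1)) ^ α :=
          Real.rpow_le_rpow (abs_nonneg _) hd hα.le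
        have h2 : (|β| * t * s ^ (β - 1)) ^ α
            = (|β| * t) ^ α * s ^ (α * (β - 1)) := by
          rw [Real.mul_rpow (by positivity) (Real.rpow_nonneg hs0.le _),
            mul_comm α (β - 1), Real.rpow_mul hs0.le]
        linarith
      rw [Real.norm_eq_abs, Real.norm_eq_abs,
        abs_of_nonneg (Real.rpow_nonneg (abs_nonneg _) _),
        abs_of_nonneg (by positivity : (0:ℝ) ≤ (|β| * t) ^ α * s ^ (α * (β - 1)))]
      exact key
  · intro H hH hHα hint
    set β : ℝ := H - 1 / α with hβdef
    have hβ : β ≠ 0 := sub_ne_zero.mpr hHα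
    set c : ℝ := (|β| * t * (1 + t) ^ (-|β - 1|)) ^ α with hcdef
    have hc0 : 0 < c := by
      have h1 : 0 < |β| := abs_pos.mpr hβ
      have h2 : (0:ℝ) < (1 + t) ^ (-|β - 1|) := Real.rpow_pos_of_pos (by linarith) _
      positivity
    have hint1 : IntegrableOn (fun s : ℝ => |(t + s) ^ β - s ^ β| ^ α)
        (Set.Ioi (1:ℝ)) := hint.mono_set (Set.Ioi_subset_Ioi zero_le_one)
    have hgmeas : AEStronglyMeasurable (fun s : ℝ => c * s ^ (α * (β - 1)))
        (volume.restrict (Set.Ioi (1:ℝ))) :=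
      (measurable_const.mul (Measurable.pow_const measurable_id _)).aestronglyMeasurable
    have hg : IntegrableOn (fun s : ℝ => c * s ^ (α * (β - 1))) (Set.Ioi (1:ℝ)) := by
      refine Integrable.mono hint1 hgmeas ?_
      rw [ae_restrict_iff' measurableSet_Ioi]
      refine Filter.Eventually.of_forall fun s hs => ?_
      have hs1 : (1:ℝ) < s := hs
      have hs0 : (0:ℝ) < s := by linarith
      have hd := lfsm_lower β t hβ ht hs1.le
      have key : c * s ^ (α * (β - 1)) ≤ |(t + s) ^ β - s ^ β| ^ α := by
        have h2 : (|β| * t * ((1 + t) ^ (-|β - 1|) * s ^ (β - 1))) ^ α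
            = c * s ^ (α * (β - 1)) := by
          have hre : |β| * t * ((1 + t) ^ (-|β - 1|) * s ^ (β - 1))
              = (|β| * t * (1 + t) ^ (-|β - 1|)) * s ^ (β - 1) := by ring
          rw [hcdef, hre, Real.mul_rpow (by positivity) (Real.rpow_nonneg hs0.le _),
            ← Real.rpow_mul hs0.le, mul_comm (β - 1) α]
        have h1 : (|β| * t * ((1 + t) ^ (-|β - 1|) * s ^ (β - 1))) ^ α
            ≤ |(t + s) ^ β - s ^ β| ^ α :=
          Real.rpow_le_rpow (by positivity) hd hα.le
        linarith
      rw [Real.norm_eq_abs, Real.norm_eq_abs,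
        abs_of_nonneg (by positivity : (0:ℝ) ≤ c * s ^ (α * (β - 1))),
        abs_of_nonneg (Real.rpow_nonneg (abs_nonneg _) _)]
      exact key
    have hg2 : IntegrableOn (fun s : ℝ => s ^ (α * (β - 1))) (Set.Ioi (1:ℝ)) := by
      have := hg.const_mul c⁻¹
      simpa [← mul_assoc, inv_mul_cancel₀ hc0.ne', IntegrableOn] using this
    rw [integrableOn_Ioi_rpow_iff zero_lt_one] at hg2
    have : α * (β - 1) = α * H - 1 - α := by rw [hβdef]; field_simp
    nlinarith
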